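/- Let f_n : {0,1}^n → {0,1} be the laced Boolean function: p is the least prime with p ≥ n; for X = (x_1,…,x_n), s(X) is the unique integer with 1 ≤ s(X) ≤ p and s(X) ≡ Σ_{k=1}^{n} k·x_k (mod p), and f_n(X) = x_{s(X)} if s(X) ≤ n, else f_n(X) = x_1. Then the weight wt(f_n) = |{X ∈ {0,1}^n : f_n(X) = 1}| satisfies wt(f_n) = 2^{n−1}(1 + o(1)) as n → ∞; that is, wt(f_n)/2^{n−1} → 1 as n → ∞. In particular, f_n is asymptotically balanced. -/

import Mathlib

open Finset

/-- The least prime `p` with `p ≥ n`. -/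
def leastPrime (n : ℕ) : ℕ := Nat.find (Nat.exists_infinite_primes n)

/-- The weighted sum `Σ_{k=1}^n k·x_k` of a Boolean vector `X = (x_1, …, x_n)`. -/
def weightedSum {n : ℕ} (X : Fin n → Bool) : ℕ :=
  ∑ k : Fin n, (k.val + 1) * (if X k then 1 else 0)

/-- `s(X)`: the unique integer with `1 ≤ s(X) ≤ p` and
`s(X) ≡ Σ_{k=1}^n k·x_k (mod p)`, where `p` is the least prime `≥ n`. -/
def sVal {n : ℕ} (X : Fin n → Bool) : ℕ :=
  if weightedSum X % leastPrime n = 0 then leastPrime n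
  else weightedSum X % leastPrime n

/-- The laced Boolean function (weighted sum function):
`f(X) = x_{s(X)}` if `1 ≤ s(X) ≤ n`, and `f(X) = x_1` otherwise.
(For `n = 0` there are no variables and we set the value to `false`.) -/
def laced {n : ℕ} (X : Fin n → Bool) : Bool :=
  if h : 1 ≤ sVal X ∧ sVal X ≤ n then X ⟨sVal X - 1, by omega⟩
  else if h0 : 0 < n then X ⟨0, h0⟩ else false


open Complex Real Filter

noncomputable def Complex.abs : AbsoluteValue ℂ ℝ where
  toFun z := ‖z‖
  map_mul' := norm_mul
  nonneg' := norm_nonneg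
  eq_zero' _ := norm_eq_zero
  add_le' := norm_add_le

lemma Complex.abs_conj (z : ℂ) : Complex.abs ((starRingEnd ℂ) z) = Complex.abs z :=
  Complex.norm_conj z

lemma Complex.abs_exp (z : ℂ) : Complex.abs (Complex.exp z) = Real.exp z.re :=
  Complex.norm_exp z

lemma Complex.abs_ofReal (r : ℝ) : Complex.abs (r : ℂ) = |r| := by
  show ‖(r : ℂ)‖ = |r|
  simp

lemma Complex.abs_natCast (n : ℕ) : Complex.abs (n : ℂ) = n := by
  show ‖(n : ℂ)‖ = n
  simp

lemma Complex.abs_im_le_abs (z : ℂ) : |z.im| ≤ Complex.abs z :=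
  Complex.abs_im_le_norm z

lemma prod_one_add_pow {p : ℕ} (hodd : Odd p) {ξ : ℂ}
    (hξ : IsPrimitiveRoot ξ p) : ∏ b ∈ Finset.Ico 1 p, (1 + ξ ^ b) = 1 := by
  have hp : 0 < p := hodd.pos
  have key : ∀ x : ℂ, x ^ p - 1 = ∏ i ∈ Finset.range p, (x - ξ ^ i) := by
    intro x
    have h2 := Polynomial.X_pow_sub_one_eq_prod (R := ℂ) hp hξ
    have h3 : Polynomial.nthRootsFinset p (1 : ℂ) = Finset.image (ξ ^ ·) (Finset.range p) := by
      ext z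
      simp only [Polynomial.mem_nthRootsFinset hp, Finset.mem_image, Finset.mem_range]
      haveI : NeZero p := ⟨hp.ne'⟩
      constructor
      · intro hz
        obtain ⟨i, hi, rfl⟩ := hξ.eq_pow_of_pow_eq_one hz
        exact ⟨i, hi, rfl⟩
      · rintro ⟨i, hi, rfl⟩
        rw [← pow_mul, mul_comm, pow_mul, hξ.pow_eq_one, one_pow]
    have h4 : ∏ z ∈ Polynomial.nthRootsFinset p (1 : ℂ), (Polynomial.X - Polynomial.C z)
        = ∏ i ∈ Finset.range p, (Polynomial.X - Polynomial.C (ξ ^ i)) := by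
      rw [h3, Finset.prod_image]
      intro a ha b hb hab
      exact hξ.injOn_pow (by simpa using ha) (by simpa using hb) hab
    have := congrArg (Polynomial.eval x) (h2.trans h4)
    simpa [Polynomial.eval_prod] using this
  have h5 := key (-1)
  have h6 : (-1 : ℂ) ^ p - 1 = -2 := by
    rw [hodd.neg_one_pow]; ring
  rw [h6] at h5
  have h7 : ∏ i ∈ Finset.range p, ((-1 : ℂ) - ξ ^ i)
      = ((-1) - 1) * ∏ i ∈ Finset.Ico 1 p, ((-1 : ℂ) - ξ ^ i) := by
    rw [Finset.range_eq_Ico, Finset.prod_eq_prod_Ico_succ_bot hp]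
    norm_num
  rw [h7] at h5
  have h8 : ∏ i ∈ Finset.Ico 1 p, ((-1 : ℂ) - ξ ^ i) = 1 := by
    linear_combination h5 / 2
  have h9 : ∀ i ∈ Finset.Ico 1 p, (1 : ℂ) + ξ ^ i = (-1) * ((-1) - ξ ^ i) := by
    intro i _; ring
  rw [Finset.prod_congr rfl h9, Finset.prod_mul_distrib, Finset.prod_const, h8, mul_one,
    Nat.card_Ico]
  have : Even (p - 1) := by
    obtain ⟨k, rfl⟩ := hodd; simpa using even_two_mul k
  exact this.neg_one_pow

lemma half_prod_abs {p : ℕ} (hodd : Odd p) {ξ : ℂ}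
    (hξ : IsPrimitiveRoot ξ p) (habs : Complex.abs ξ = 1) :
    ∏ b ∈ Finset.Ico 1 ((p + 1) / 2), Complex.abs (1 + ξ ^ b) = 1 := by
  have hp : 0 < p := hodd.pos
  have hp2 : p % 2 = 1 := Nat.odd_iff.mp hodd
  set m : ℕ := (p + 1) / 2 with hm
  have hm1 : 1 ≤ m := by omega
  have hmp : m ≤ p := by omega
  have hfull : ∏ b ∈ Finset.Ico 1 p, Complex.abs (1 + ξ ^ b) = 1 := by
    rw [← map_prod, prod_one_add_pow hodd hξ, map_one]
  have hsplit : (∏ b ∈ Finset.Ico 1 m, Complex.abs (1 + ξ ^ b)) *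
      ∏ b ∈ Finset.Ico m p, Complex.abs (1 + ξ ^ b) = 1 := by
    rw [Finset.prod_Ico_consecutive _ hm1 hmp, hfull]
  have hmirror : ∏ b ∈ Finset.Ico m p, Complex.abs (1 + ξ ^ b)
      = ∏ b ∈ Finset.Ico 1 m, Complex.abs (1 + ξ ^ b) := by
    apply Finset.prod_nbij' (fun b => p - b) (fun b => p - b)
    · intro a ha; simp only [Finset.mem_Ico] at *; omega
    · intro a ha; simp only [Finset.mem_Ico] at *; omega
    · intro a ha; simp only [Finset.mem_Ico] at ha; omega
    · intro a ha; simp only [Finset.mem_Ico] at ha; omega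
    · intro b hb
      simp only [Finset.mem_Ico] at hb
      have h1 : ξ ^ (p - b) = (starRingEnd ℂ) (ξ ^ b) := by
        have hb1 : ξ ^ (p - b) * ξ ^ b = 1 := by
          rw [← pow_add]
          have : p - b + b = p := by omega
          rw [this, hξ.pow_eq_one]
        have habsb : Complex.abs (ξ ^ b) = 1 := by
          rw [map_pow, habs, one_pow]
        rw [eq_inv_of_mul_eq_one_left hb1, Complex.inv_eq_conj habsb]
      rw [h1, ← map_one (starRingEnd ℂ), ← map_add, Complex.abs_conj, map_one]
  rw [hmirror] at hsplit
  have hnn : 0 ≤ ∏ b ∈ Finset.Ico 1 m, Complex.abs (1 + ξ ^ b) :=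
    Finset.prod_nonneg fun _ _ => Complex.abs.nonneg _
  nlinarith [hsplit, hnn]

-- sin(2πa/p) ≥ 2/p for 1 ≤ a ≤ (p-1)/2
lemma sin_lower {p a : ℕ} (hodd : Odd p) (ha1 : 1 ≤ a) (ha2 : 2 * a < p) :
    2 / p ≤ Real.sin (2 * π * a / p) := by
  have hp : 0 < p := hodd.pos
  have hppos : (0:ℝ) < p := by exact_mod_cast hp
  have hpi := Real.pi_pos
  have hapos : (1:ℝ) ≤ a := by exact_mod_cast ha1
  have ha2' : 2 * (a:ℝ) < p := by exact_mod_cast ha2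
  set φ : ℝ := 2 * π * a / p with hφ
  have hφpos : 0 < φ := by positivity
  rcases le_or_gt φ (π / 2) with h | h
  · have := Real.mul_le_sin hφpos.le h
    have h2 : 2 / (p:ℝ) ≤ 2 / π * φ := by
      rw [hφ]
      rw [div_le_iff₀ hppos]
      have : 2 / π * (2 * π * ↑a / ↑p) * ↑p = 4 * a := by
        field_simp; ring
      rw [this]; nlinarith
    linarith
  · have hsymm : Real.sin φ = Real.sin (π - φ) := (Real.sin_pi_sub φ).symm
    have hlt : φ < π := by
      rw [hφ, div_lt_iff₀ hppos]
      nlinarith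
    have h1 : 0 ≤ π - φ := by linarith
    have h2 : π - φ ≤ π / 2 := by linarith
    have := Real.mul_le_sin h1 h2
    have h3 : 2 / (p:ℝ) ≤ 2 / π * (π - φ) := by
      have hπφ : π / p ≤ π - φ := by
        rw [hφ]
        rw [div_le_iff₀ hppos] at *
        have hfp : (2 * (a:ℝ) + 1) ≤ p := by
          have : 2 * a + 1 ≤ p := by omega
          exact_mod_cast this
        have hexp : (π - 2 * π * ↑a / ↑p) * ↑p = π * (p - 2 * a) := by
          field_simp
        rw [hexp]
        nlinarith
      calc 2 / (p:ℝ) = 2 / π * (π / p) := by field_simp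
        _ ≤ 2 / π * (π - φ) := by
            apply mul_le_mul_of_nonneg_left hπφ; positivity
    rw [hsymm]; linarith

lemma abs_one_add_ge {p : ℕ} (hodd : Odd p) (c : ℕ) :
    2 / p ≤ Complex.abs (1 + Complex.exp (2 * ↑π * I / p) ^ c) := by
  have hp : 0 < p := hodd.pos
  have hppos : (0:ℝ) < p := by exact_mod_cast hp
  have hpmod : p % 2 = 1 := Nat.odd_iff.mp hodd
  set ζ : ℂ := Complex.exp (2 * ↑π * I / p) with hζ
  have hpow : ∀ b : ℕ, ζ ^ b = Complex.exp ((2 * π * b / p : ℝ) * I) := by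
    intro b
    rw [hζ, ← Complex.exp_nat_mul]
    congr 1
    push_cast
    field_simp
  have hper : ζ ^ c = ζ ^ (c % p) := by
    conv_lhs => rw [← Nat.div_add_mod c p]
    rw [pow_add, pow_mul]
    have : ζ ^ p = 1 := by
      rw [hpow p]
      have : (2 * π * p / p : ℝ) = 2 * π := by field_simp
      rw [this]
      simpa using Complex.exp_int_mul_two_pi_mul_I 1
    rw [this, one_pow, one_mul]
  rw [hper]
  set r := c % p with hr
  rcases Nat.eq_zero_or_pos r with h0 | hrpos
  · rw [h0, pow_zero]
    norm_num
    rw [div_le_iff₀ hppos]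
    have : (1:ℝ) ≤ p := by exact_mod_cast hp
    have h2c : Complex.abs 2 = 2 := by show ‖(2:ℂ)‖ = 2; norm_num
    nlinarith
  · have hrp : r < p := Nat.mod_lt c hp
    have him : (ζ ^ r).im = Real.sin (2 * π * r / p) := by
      rw [hpow r, Complex.exp_ofReal_mul_I_im]
    have habs : |Real.sin (2 * π * r / p)| ≤ Complex.abs (1 + ζ ^ r) := by
      have h1 : (1 + ζ ^ r).im = (ζ ^ r).im := by simp
      calc |Real.sin (2 * π * r / p)| = |(1 + ζ ^ r).im| := by rw [h1, him]
        _ ≤ Complex.abs (1 + ζ ^ r) := Complex.abs_im_le_abs _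
    refine le_trans ?_ habs
    rcases lt_trichotomy (2 * r) p with h | h | h
    · have := sin_lower hodd hrpos h
      calc (2:ℝ)/p ≤ Real.sin (2 * π * r / p) := this
        _ ≤ |Real.sin (2 * π * r / p)| := le_abs_self _
    · omega
    · set a := p - r with ha
      have ha1 : 1 ≤ a := by omega
      have ha2 : 2 * a < p := by omega
      have hsin := sin_lower hodd ha1 ha2
      have heq : (2 * π * r / p : ℝ) = 2 * π - 2 * π * a / p := by
        have hrpa : (r : ℝ) = p - a := by
          have : r = p - a := by omega
          rw [this]
          push_cast [Nat.cast_sub (by omega : a ≤ p)]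
          ring
        rw [hrpa]
        field_simp
      rw [heq]
      have : Real.sin (2 * π - 2 * π * a / p) = -Real.sin (2 * π * a / p) := by
        rw [show (2 * π - 2 * π * a / p : ℝ) = -(2 * π * a / p) + 2*π by ring,
          Real.sin_add_two_pi, Real.sin_neg]
      rw [this, abs_neg]
      calc (2:ℝ)/p ≤ Real.sin (2 * π * a / p) := hsin
        _ ≤ |Real.sin (2 * π * a / p)| := le_abs_self _

lemma F_bound {n p : ℕ} (hodd : Odd p) (hp : p.Prime) (hpn : (p + 1) / 2 ≤ n)
    {t : ℕ} (ht : ¬ p ∣ t) (j : Fin n) :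
    Complex.abs (∏ k ∈ Finset.univ.erase j,
        (1 + Complex.exp (2 * ↑π * I / p) ^ (t * (k.val + 1))))
      ≤ p * 2 ^ (n + 1 - (p + 1) / 2) := by
  have hp0 : 0 < p := hodd.pos
  have hppos : (0:ℝ) < p := by exact_mod_cast hp0
  set ζ : ℂ := Complex.exp (2 * ↑π * I / p) with hζdef
  have hζ : IsPrimitiveRoot ζ p := Complex.isPrimitiveRoot_exp p hp0.ne'
  have habsζ : Complex.abs ζ = 1 := by
    rw [hζdef, Complex.abs_exp]
    have : (2 * ↑π * I / p : ℂ).re = 0 := by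
      simp [Complex.div_re]
    rw [this, Real.exp_zero]
  set ξ : ℂ := ζ ^ t with hξdef
  have hcop : t.Coprime p := ((Nat.Prime.coprime_iff_not_dvd hp).mpr ht).symm
  have hξ : IsPrimitiveRoot ξ p := hζ.pow_of_coprime t hcop
  have habsξ : Complex.abs ξ = 1 := by rw [hξdef, map_pow, habsζ, one_pow]
  set m : ℕ := (p + 1) / 2 with hm
  set f : ℕ → ℝ := fun b => Complex.abs (1 + ξ ^ b) with hf
  have hfnonneg : ∀ b, 0 ≤ f b := fun b => Complex.abs.nonneg _
  have hfle2 : ∀ b, f b ≤ 2 := by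
    intro b
    calc Complex.abs (1 + ξ ^ b) ≤ Complex.abs 1 + Complex.abs (ξ ^ b) :=
          Complex.abs.add_le _ _
      _ = 2 := by rw [map_pow, habsξ, one_pow, map_one]; norm_num
  -- rewrite the product
  have hrw : Complex.abs (∏ k ∈ Finset.univ.erase j, (1 + ζ ^ (t * (k.val + 1))))
      = ∏ k ∈ Finset.univ.erase j, f (k.val + 1) := by
    rw [map_prod]
    apply Finset.prod_congr rfl
    intro k _
    show Complex.abs (1 + ζ ^ (t * (k.val + 1))) = Complex.abs (1 + (ζ ^ t) ^ (k.val + 1))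
    rw [pow_mul]
  rw [hrw]
  -- full product bound
  have hfull : ∏ k : Fin n, f (k.val + 1) ≤ 2 ^ (n + 1 - m) := by
    have h1 : ∏ k : Fin n, f (k.val + 1) = ∏ b ∈ Finset.Ico 1 (n + 1), f b := by
      rw [Finset.prod_Ico_eq_prod_range]
      rw [Fin.prod_univ_eq_prod_range (fun i => f (i + 1)) n]
      simp only [Nat.add_sub_cancel]
      exact Finset.prod_congr rfl fun i _ => by rw [Nat.add_comm 1 i]
    rw [h1, ← Finset.prod_Ico_consecutive _ (by omega : 1 ≤ m) (by omega : m ≤ n + 1)]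
    have h2 : ∏ b ∈ Finset.Ico 1 m, f b = 1 := half_prod_abs hodd hξ habsξ
    rw [h2, one_mul]
    calc ∏ b ∈ Finset.Ico m (n+1), f b ≤ ∏ b ∈ Finset.Ico m (n+1), (2:ℝ) := by
          apply Finset.prod_le_prod (fun b _ => hfnonneg b) (fun b _ => hfle2 b)
      _ = 2 ^ (n + 1 - m) := by rw [Finset.prod_const, Nat.card_Ico]
  have hmul : (∏ k ∈ Finset.univ.erase j, f (k.val + 1)) * f (j.val + 1)
      = ∏ k : Fin n, f (k.val + 1) :=
    Finset.prod_erase_mul _ _ (Finset.mem_univ j)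
  have hfj : 2 / (p:ℝ) ≤ f (j.val + 1) := by
    have h := abs_one_add_ge hodd (t * (j.val + 1))
    show 2 / (p:ℝ) ≤ Complex.abs (1 + (ζ ^ t) ^ (j.val + 1))
    rw [← pow_mul]
    exact h
  have hfj2 : 2 ≤ (p:ℝ) * f (j.val + 1) := by
    rw [div_le_iff₀ hppos] at hfj; linarith
  have hE0 : 0 ≤ ∏ k ∈ Finset.univ.erase j, f (k.val + 1) :=
    Finset.prod_nonneg fun b _ => hfnonneg _
  have hpow0 : (0:ℝ) < 2 ^ (n + 1 - m) := by positivity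
  nlinarith [mul_le_mul_of_nonneg_right hfj2 hE0,
    mul_le_mul_of_nonneg_left hfull hppos.le]

lemma leastPrime_prime (n : ℕ) : (leastPrime n).Prime :=
  (Nat.find_spec (Nat.exists_infinite_primes n)).2

lemma le_leastPrime (n : ℕ) : n ≤ leastPrime n :=
  (Nat.find_spec (Nat.exists_infinite_primes n)).1

lemma leastPrime_le {n q : ℕ} (hq : q.Prime) (h : n ≤ q) : leastPrime n ≤ q :=
  Nat.find_min' _ ⟨h, hq⟩

lemma leastPrime_pos (n : ℕ) : 0 < leastPrime n := (leastPrime_prime n).pos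

lemma sVal_pos {n : ℕ} (X : Fin n → Bool) : 1 ≤ sVal X := by
  unfold sVal
  have := leastPrime_pos n
  split_ifs with h
  · omega
  · omega

lemma sVal_le {n : ℕ} (X : Fin n → Bool) : sVal X ≤ leastPrime n := by
  unfold sVal
  have := Nat.mod_lt (weightedSum X) (leastPrime_pos n)
  split_ifs with h <;> omega

lemma sVal_eq_iff {n : ℕ} (X : Fin n → Bool) {m : ℕ} (hm1 : 1 ≤ m)
    (hmp : m ≤ leastPrime n) :
    sVal X = m ↔ weightedSum X % leastPrime n = m % leastPrime n := by
  unfold sVal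
  have hmod := Nat.mod_lt (weightedSum X) (leastPrime_pos n)
  rcases eq_or_lt_of_le hmp with h | h
  · subst h
    rw [Nat.mod_self]
    split_ifs with h0 <;> omega
  · rw [Nat.mod_eq_of_lt h]
    split_ifs with h0 <;> omega

lemma card_partition {n : ℕ} (hn : 0 < n) :
    (Finset.univ.filter (fun X : Fin n → Bool => laced X = true)).card
      = (∑ j : Fin n, (Finset.univ.filter
          (fun X : Fin n → Bool => X j = true ∧ sVal X = j.val + 1)).card)
        + ∑ m ∈ Finset.Icc (n + 1) (leastPrime n), (Finset.univ.filter
            (fun X : Fin n → Bool => X ⟨0, hn⟩ = true ∧ sVal X = m)).card := by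
  simp only [Finset.card_filter]
  rw [Finset.sum_comm (s := Finset.univ) (t := Finset.univ),
    Finset.sum_comm (s := Finset.Icc (n + 1) (leastPrime n)) (t := Finset.univ),
    ← Finset.sum_add_distrib]
  apply Finset.sum_congr rfl
  intro X _
  have hs1 := sVal_pos X
  have hs2 := sVal_le X
  have hnp := le_leastPrime n
  by_cases hsn : sVal X ≤ n
  · have hl : laced X = X ⟨sVal X - 1, by omega⟩ := by
      unfold laced; rw [dif_pos ⟨hs1, hsn⟩]
    have h2 : ∑ m ∈ Finset.Icc (n + 1) (leastPrime n),
        (if X ⟨0, hn⟩ = true ∧ sVal X = m then 1 else 0) = 0 := by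
      apply Finset.sum_eq_zero
      intro m hm
      simp only [Finset.mem_Icc] at hm
      rw [if_neg]
      rintro ⟨-, rfl⟩
      omega
    have h1 : ∑ j : Fin n, (if X j = true ∧ sVal X = j.val + 1 then 1 else 0)
        = if X ⟨sVal X - 1, by omega⟩ = true then 1 else 0 := by
      rw [Finset.sum_eq_single (⟨sVal X - 1, by omega⟩ : Fin n)]
      · congr 1
        simp only [eq_iff_iff, and_iff_left_iff_imp]
        intro; omega
      · intro j _ hj
        rw [if_neg]
        rintro ⟨-, h⟩
        apply hj
        have : j.val = sVal X - 1 := by omega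
        exact Fin.ext this
      · intro h; exact absurd (Finset.mem_univ _) h
    rw [hl, h1, h2, Nat.add_zero]
  · have hl : laced X = X ⟨0, hn⟩ := by
      unfold laced
      rw [dif_neg (by omega), dif_pos hn]
    have h1 : ∑ j : Fin n, (if X j = true ∧ sVal X = j.val + 1 then 1 else 0) = 0 := by
      apply Finset.sum_eq_zero
      intro j _
      rw [if_neg]
      rintro ⟨-, h⟩
      have := j.isLt
      omega
    have h2 : ∑ m ∈ Finset.Icc (n + 1) (leastPrime n),
        (if X ⟨0, hn⟩ = true ∧ sVal X = m then 1 else 0)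
        = if X ⟨0, hn⟩ = true then 1 else 0 := by
      rw [Finset.sum_eq_single (sVal X)]
      · congr 1
        simp only [eq_iff_iff, and_iff_left_iff_imp]
        intro; trivial
      · intro m _ hm
        rw [if_neg]
        rintro ⟨-, h⟩
        exact hm h.symm
      · intro h
        exfalso
        apply h
        simp only [Finset.mem_Icc]
        omega
    rw [hl, h1, h2, Nat.zero_add]

lemma count_fourier {n : ℕ} (j : Fin n) {m : ℕ} {ζ : ℂ}
    (hζ : IsPrimitiveRoot ζ (leastPrime n)) (hζ0 : ζ ≠ 0) (hm1 : 1 ≤ m)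
    (hmp : m ≤ leastPrime n) :
    ((Finset.univ.filter (fun X : Fin n → Bool => X j = true ∧ sVal X = m)).card : ℂ)
      = (leastPrime n : ℂ)⁻¹ * ∑ t ∈ Finset.range (leastPrime n),
          ((ζ ^ m) ^ t)⁻¹ * (ζ ^ (j.val + 1)) ^ t *
            ∏ k ∈ Finset.univ.erase j, (1 + ζ ^ (t * (k.val + 1))) := by
  set p : ℕ := leastPrime n with hpdef
  have hp0 : 0 < p := leastPrime_pos n
  have hζm : ζ ^ m ≠ 0 := pow_ne_zero _ hζ0
  have hpC : (p : ℂ) ≠ 0 := by exact_mod_cast hp0.ne'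
  -- indicator formula
  have hind : ∀ X : Fin n → Bool, (if sVal X = m then (1:ℂ) else 0)
      = (p : ℂ)⁻¹ * ∑ t ∈ Finset.range p,
          (ζ ^ weightedSum X) ^ t * ((ζ ^ m) ^ t)⁻¹ := by
    intro X
    have hw : ∀ t : ℕ, (ζ ^ weightedSum X) ^ t * ((ζ ^ m) ^ t)⁻¹
        = (ζ ^ weightedSum X * (ζ ^ m)⁻¹) ^ t := by
      intro t; rw [mul_pow, inv_pow]
    simp only [hw]
    set w : ℂ := ζ ^ weightedSum X * (ζ ^ m)⁻¹ with hwdef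
    have hpowmod : ∀ a : ℕ, ζ ^ a = ζ ^ (a % p) := by
      intro a
      conv_lhs => rw [← Nat.div_add_mod a p]
      rw [pow_add, pow_mul, hζ.pow_eq_one, one_pow, one_mul]
    have hpow_inj : ∀ a b : ℕ, ζ ^ a = ζ ^ b ↔ a % p = b % p := by
      intro a b
      constructor
      · intro h
        rw [hpowmod a, hpowmod b] at h
        exact hζ.injOn_pow (by simpa using Nat.mod_lt a hp0)
          (by simpa using Nat.mod_lt b hp0) h
      · intro h; rw [hpowmod a, hpowmod b, h]
    have hiff : sVal X = m ↔ w = 1 := by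
      rw [sVal_eq_iff X hm1 hmp, ← hpow_inj, hwdef]
      constructor
      · intro h; rw [h, mul_inv_cancel₀ hζm]
      · intro h
        rw [← div_eq_mul_inv] at h
        exact (div_eq_one_iff_eq hζm).mp h
    by_cases h : sVal X = m
    · rw [if_pos h, (hiff.mp h)]
      simp only [one_pow, Finset.sum_const, Finset.card_range, nsmul_eq_mul, mul_one]
      rw [inv_mul_cancel₀ hpC]
    · rw [if_neg h]
      have hw1 : w ≠ 1 := fun hc => h (hiff.mpr hc)
      have hwp : w ^ p = 1 := by
        rw [hwdef, mul_pow, inv_pow, ← pow_mul, ← pow_mul, mul_comm (weightedSum X) p,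
          mul_comm m p, pow_mul, pow_mul, hζ.pow_eq_one, one_pow, one_pow, inv_one, mul_one]
      rw [geom_sum_eq hw1, hwp]
      simp
  -- product formula
  have hprod : ∀ t : ℕ, (∑ X : Fin n → Bool,
        (if X j = true then (1:ℂ) else 0) * (ζ ^ weightedSum X) ^ t)
      = (ζ ^ (j.val + 1)) ^ t *
          ∏ k ∈ Finset.univ.erase j, (1 + ζ ^ (t * (k.val + 1))) := by
    intro t
    have hterm : ∀ X : Fin n → Bool,
        (if X j = true then (1:ℂ) else 0) * (ζ ^ weightedSum X) ^ t
        = ∏ k : Fin n, (if X k then ζ ^ (t * (k.val + 1)) else if k = j then 0 else 1) := by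
      intro X
      have hS : (ζ ^ weightedSum X) ^ t = ∏ k : Fin n, ζ ^ (t * ((k.val + 1) * if X k then 1 else 0)) := by
        rw [← pow_mul, Finset.prod_pow_eq_pow_sum]
        congr 1
        rw [weightedSum, Finset.sum_mul]
        exact Finset.sum_congr rfl fun k _ => by ring
      rw [hS]
      by_cases hXj : X j = true
      · rw [if_pos hXj, one_mul]
        apply Finset.prod_congr rfl
        intro k _
        by_cases hXk : X k = true
        · simp [hXk]
        · simp only [Bool.not_eq_true] at hXk
          have hkj : k ≠ j := by
            intro hc; rw [hc] at hXk; rw [hXj] at hXk; exact absurd hXk (by simp)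
          simp [hXk, hkj]
      · rw [if_neg hXj, zero_mul]
        symm
        apply Finset.prod_eq_zero (Finset.mem_univ j)
        simp only [Bool.not_eq_true] at hXj
        rw [hXj, if_neg (by simp), if_pos rfl]
    simp only [hterm]
    rw [← Fintype.prod_sum
      (f := fun (k : Fin n) (b : Bool) => if b then ζ ^ (t * (k.val + 1)) else if k = j then 0 else 1)]
    have hsum : ∀ k : Fin n, (∑ b : Bool, if b then ζ ^ (t * (k.val + 1)) else if k = j then 0 else 1)
        = if k = j then ζ ^ (t * (j.val + 1)) else 1 + ζ ^ (t * (k.val + 1)) := by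
      intro k
      rw [Fintype.sum_bool]
      by_cases hk : k = j
      · subst hk; simp
      · simp [hk, add_comm]
    rw [Finset.prod_congr rfl (fun k _ => hsum k)]
    rw [← Finset.mul_prod_erase Finset.univ _ (Finset.mem_univ j), if_pos rfl]
    have : (ζ ^ (j.val + 1)) ^ t = ζ ^ (t * (j.val + 1)) := by
      rw [← pow_mul, mul_comm]
    rw [this]
    congr 1
    apply Finset.prod_congr rfl
    intro k hk
    rw [if_neg (Finset.ne_of_mem_erase hk)]
  -- assemble
  have hcard : ((Finset.univ.filter
        (fun X : Fin n → Bool => X j = true ∧ sVal X = m)).card : ℂ)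
      = ∑ X : Fin n → Bool, (if X j = true then (1:ℂ) else 0) * (if sVal X = m then (1:ℂ) else 0) := by
    rw [Finset.card_filter]
    push_cast
    apply Finset.sum_congr rfl
    intro X _
    by_cases h1 : X j = true <;> by_cases h2 : sVal X = m <;> simp [h1, h2]
  rw [hcard]
  simp only [hind]
  have hstep : ∀ X : Fin n → Bool,
      (if X j = true then (1:ℂ) else 0) *
        ((p:ℂ)⁻¹ * ∑ t ∈ Finset.range p, (ζ ^ weightedSum X) ^ t * ((ζ ^ m) ^ t)⁻¹)
      = ∑ t ∈ Finset.range p, (p:ℂ)⁻¹ * (((ζ ^ m) ^ t)⁻¹ *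
          ((if X j = true then (1:ℂ) else 0) * (ζ ^ weightedSum X) ^ t)) := by
    intro X
    rw [Finset.mul_sum, Finset.mul_sum]
    exact Finset.sum_congr rfl fun t _ => by ring
  rw [Finset.sum_congr rfl fun X _ => hstep X, Finset.sum_comm, Finset.mul_sum]
  apply Finset.sum_congr rfl
  intro t _
  rw [← Finset.mul_sum, ← Finset.mul_sum, hprod t]
  ring

lemma main_bound {n : ℕ} (hn : 5 ≤ n) :
    |((Finset.univ.filter (fun X : Fin n → Bool => laced X = true)).card : ℝ)
        - 2 ^ (n - 1)|
      ≤ (leastPrime n : ℝ) ^ 2 * 2 ^ (n + 1 - (leastPrime n + 1) / 2) := by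
  have hn0 : 0 < n := by omega
  obtain ⟨p, hpdef⟩ : ∃ p, p = leastPrime n := ⟨_, rfl⟩
  have hp : p.Prime := hpdef ▸ leastPrime_prime n
  have hnp : n ≤ p := hpdef ▸ le_leastPrime n
  have hp0 : 0 < p := hp.pos
  have hodd : Odd p := hp.odd_of_ne_two (by omega)
  have hpm : p % 2 = 1 := Nat.odd_iff.mp hodd
  have hp2n : p ≤ 2 * n - 1 := by
    obtain ⟨q, hqp, hq1, hq2⟩ := Nat.exists_prime_lt_and_le_two_mul (n := n) (by omega)
    have hle : leastPrime n ≤ q := leastPrime_le hqp (le_of_lt hq1)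
    have hq2' : q % 2 = 1 := Nat.odd_iff.mp (hqp.odd_of_ne_two (by omega))
    omega
  have hμn : (p + 1) / 2 ≤ n := by omega
  obtain ⟨ζ, hζdef⟩ : ∃ z : ℂ, z = Complex.exp (2 * ↑π * I / p) := ⟨_, rfl⟩
  have hζprim : IsPrimitiveRoot ζ (leastPrime n) := by
    rw [hζdef, hpdef]
    exact Complex.isPrimitiveRoot_exp _ (hpdef ▸ hp0.ne')
  have hζ0 : ζ ≠ 0 := by rw [hζdef]; exact Complex.exp_ne_zero _
  have hpC : (p : ℂ) ≠ 0 := by exact_mod_cast hp0.ne'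
  set F : ℕ → Fin n → ℂ :=
    fun t j => ∏ k ∈ Finset.univ.erase j, (1 + ζ ^ (t * (k.val + 1))) with hF
  have hcast : ((p + 1 - (n + 1) : ℕ) : ℂ) = (p : ℂ) - n := by
    have h9 : p + 1 - (n + 1) = p - n := by omega
    rw [h9]
    push_cast [Nat.cast_sub hnp]
    ring
  have hF0 : ∀ j : Fin n, F 0 j = 2 ^ (n - 1) := by
    intro j
    have h2 : ∀ k ∈ Finset.univ.erase j, (1 : ℂ) + ζ ^ (0 * (k.val + 1)) = 2 := by
      intro k _; rw [Nat.zero_mul, pow_zero]; norm_num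
    show (∏ k ∈ Finset.univ.erase j, (1 + ζ ^ (0 * (k.val + 1)))) = 2 ^ (n - 1)
    rw [Finset.prod_congr rfl h2, Finset.prod_const,
      Finset.card_erase_of_mem (Finset.mem_univ j), Finset.card_univ, Fintype.card_fin]
  -- counts for the j-part
  have hA : ∀ j : Fin n,
      ((Finset.univ.filter
        (fun X : Fin n → Bool => X j = true ∧ sVal X = j.val + 1)).card : ℂ)
      = (p : ℂ)⁻¹ * (2 ^ (n - 1) + ∑ t ∈ Finset.Ico 1 p, F t j) := by
    intro j
    have hcf := count_fourier j (m := j.val + 1) hζprim hζ0 (by omega)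
      (by rw [← hpdef]; have := j.isLt; omega)
    rw [← hpdef] at hcf
    rw [hcf]
    congr 1
    have hsimp : ∀ t ∈ Finset.range p,
        ((ζ ^ (j.val + 1)) ^ t)⁻¹ * (ζ ^ (j.val + 1)) ^ t * F t j = F t j := by
      intro t _
      rw [inv_mul_cancel₀ (pow_ne_zero _ (pow_ne_zero _ hζ0)), one_mul]
    rw [Finset.sum_congr rfl hsimp, Finset.range_eq_Ico,
      Finset.sum_eq_sum_Ico_succ_bot hp0, hF0 j]
  -- counts for the overflow part
  have hB : ∀ m ∈ Finset.Icc (n + 1) p,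
      ((Finset.univ.filter
        (fun X : Fin n → Bool => X ⟨0, hn0⟩ = true ∧ sVal X = m)).card : ℂ)
      = (p : ℂ)⁻¹ * (2 ^ (n - 1) + ∑ t ∈ Finset.Ico 1 p,
          ((ζ ^ m) ^ t)⁻¹ * (ζ ^ ((⟨0, hn0⟩ : Fin n).val + 1)) ^ t * F t ⟨0, hn0⟩) := by
    intro m hm
    simp only [Finset.mem_Icc] at hm
    have hcf := count_fourier (⟨0, hn0⟩ : Fin n) hζprim hζ0 (m := m) (by omega)
      (by rw [← hpdef]; omega)
    rw [← hpdef] at hcf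
    rw [hcf]
    congr 1
    rw [Finset.range_eq_Ico, Finset.sum_eq_sum_Ico_succ_bot hp0]
    have ht0 : ((ζ ^ m) ^ 0)⁻¹ *
        (ζ ^ ((⟨0, hn0⟩ : Fin n).val + 1)) ^ 0 * F 0 ⟨0, hn0⟩ = 2 ^ (n - 1) := by
      rw [pow_zero, pow_zero, inv_one, one_mul, one_mul, hF0]
    rw [ht0]
  -- the main complex identity
  obtain ⟨EA, hEA⟩ : ∃ z : ℂ, z = ∑ j : Fin n, ∑ t ∈ Finset.Ico 1 p, F t j := ⟨_, rfl⟩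
  obtain ⟨EB, hEB⟩ : ∃ z : ℂ, z = ∑ m ∈ Finset.Icc (n + 1) p, ∑ t ∈ Finset.Ico 1 p,
      ((ζ ^ m) ^ t)⁻¹ * (ζ ^ ((⟨0, hn0⟩ : Fin n).val + 1)) ^ t * F t ⟨0, hn0⟩ := ⟨_, rfl⟩
  have hkey : ((Finset.univ.filter (fun X : Fin n → Bool => laced X = true)).card : ℂ)
      - 2 ^ (n - 1) = (p : ℂ)⁻¹ * (EA + EB) := by
    have h0 := card_partition hn0
    rw [← hpdef] at h0
    have h1 : ((Finset.univ.filter (fun X : Fin n → Bool => laced X = true)).card : ℂ)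
        = (∑ j : Fin n, ((Finset.univ.filter
            (fun X : Fin n → Bool => X j = true ∧ sVal X = j.val + 1)).card : ℂ))
          + ∑ m ∈ Finset.Icc (n + 1) p, ((Finset.univ.filter
              (fun X : Fin n → Bool => X ⟨0, hn0⟩ = true ∧ sVal X = m)).card : ℂ) := by
      rw [h0]; push_cast; rfl
    have h2 : (∑ j : Fin n, ((Finset.univ.filter
          (fun X : Fin n → Bool => X j = true ∧ sVal X = j.val + 1)).card : ℂ))
        = (p : ℂ)⁻¹ * ((n : ℂ) * 2 ^ (n - 1) + EA) := by
      calc (∑ j : Fin n, ((Finset.univ.filter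
            (fun X : Fin n → Bool => X j = true ∧ sVal X = j.val + 1)).card : ℂ))
          = ∑ j : Fin n, (p : ℂ)⁻¹ * (2 ^ (n - 1) + ∑ t ∈ Finset.Ico 1 p, F t j) :=
            Finset.sum_congr rfl fun j _ => hA j
        _ = (p : ℂ)⁻¹ * ∑ j : Fin n, (2 ^ (n - 1) + ∑ t ∈ Finset.Ico 1 p, F t j) :=
            (Finset.mul_sum _ _ _).symm
        _ = (p : ℂ)⁻¹ * ((n : ℂ) * 2 ^ (n - 1) + EA) := by
            rw [hEA, Finset.sum_add_distrib, Finset.sum_const, Finset.card_univ,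
              Fintype.card_fin, nsmul_eq_mul]
    have h3 : (∑ m ∈ Finset.Icc (n + 1) p, ((Finset.univ.filter
          (fun X : Fin n → Bool => X ⟨0, hn0⟩ = true ∧ sVal X = m)).card : ℂ))
        = (p : ℂ)⁻¹ * (((p : ℂ) - n) * 2 ^ (n - 1) + EB) := by
      calc (∑ m ∈ Finset.Icc (n + 1) p, ((Finset.univ.filter
            (fun X : Fin n → Bool => X ⟨0, hn0⟩ = true ∧ sVal X = m)).card : ℂ))
          = ∑ m ∈ Finset.Icc (n + 1) p, (p : ℂ)⁻¹ *
              (2 ^ (n - 1) + ∑ t ∈ Finset.Ico 1 p,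
                ((ζ ^ m) ^ t)⁻¹ * (ζ ^ ((⟨0, hn0⟩ : Fin n).val + 1)) ^ t * F t ⟨0, hn0⟩) :=
            Finset.sum_congr rfl hB
        _ = (p : ℂ)⁻¹ * ∑ m ∈ Finset.Icc (n + 1) p,
              (2 ^ (n - 1) + ∑ t ∈ Finset.Ico 1 p,
                ((ζ ^ m) ^ t)⁻¹ * (ζ ^ ((⟨0, hn0⟩ : Fin n).val + 1)) ^ t * F t ⟨0, hn0⟩) :=
            (Finset.mul_sum _ _ _).symm
        _ = (p : ℂ)⁻¹ * (((p : ℂ) - n) * 2 ^ (n - 1) + EB) := by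
            rw [hEB, Finset.sum_add_distrib, Finset.sum_const, Nat.card_Icc,
              nsmul_eq_mul, hcast]
    rw [h1, h2, h3]
    field_simp
    ring
  -- bound the error terms
  set B : ℝ := (p : ℝ) * 2 ^ (n + 1 - (p + 1) / 2) with hBdef
  have hFbd : ∀ t ∈ Finset.Ico 1 p, ∀ j : Fin n, Complex.abs (F t j) ≤ B := by
    intro t ht j
    simp only [Finset.mem_Ico] at ht
    have hdvd : ¬ p ∣ t := by
      intro hd
      have := Nat.le_of_dvd (by omega) hd
      omega
    have := F_bound hodd hp hμn hdvd j
    rw [hF]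
    convert this using 3 with k
    rw [hζdef]
  have hBpos : 0 ≤ B := by positivity
  have habsζ : Complex.abs ζ = 1 := by
    rw [hζdef, Complex.abs_exp]
    have : (2 * ↑π * I / p : ℂ).re = 0 := by simp [Complex.div_re]
    rw [this, Real.exp_zero]
  have hEAbd : Complex.abs EA ≤ (n : ℝ) * ((p - 1 : ℕ) * B) := by
    rw [hEA]

    calc Complex.abs (∑ j : Fin n, ∑ t ∈ Finset.Ico 1 p, F t j)
        ≤ ∑ j : Fin n, Complex.abs (∑ t ∈ Finset.Ico 1 p, F t j) :=
          Complex.abs.sum_le _ _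
      _ ≤ ∑ _j : Fin n, ((p - 1 : ℕ) * B : ℝ) := by
          apply Finset.sum_le_sum
          intro j _
          calc Complex.abs (∑ t ∈ Finset.Ico 1 p, F t j)
              ≤ ∑ t ∈ Finset.Ico 1 p, Complex.abs (F t j) := Complex.abs.sum_le _ _
            _ ≤ ∑ _t ∈ Finset.Ico 1 p, B :=
                Finset.sum_le_sum fun t ht => hFbd t ht j
            _ = (p - 1 : ℕ) * B := by rw [Finset.sum_const, Nat.card_Ico, nsmul_eq_mul]
      _ = (n : ℝ) * ((p - 1 : ℕ) * B) := by
          rw [Finset.sum_const, Finset.card_univ, Fintype.card_fin, nsmul_eq_mul]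
  have hEBbd : Complex.abs EB ≤ ((p - n : ℕ) : ℝ) * ((p - 1 : ℕ) * B) := by
    rw [hEB]
    calc Complex.abs (∑ m ∈ Finset.Icc (n+1) p, ∑ t ∈ Finset.Ico 1 p,
          ((ζ ^ m) ^ t)⁻¹ * (ζ ^ ((⟨0, hn0⟩ : Fin n).val + 1)) ^ t * F t ⟨0, hn0⟩)
        ≤ ∑ m ∈ Finset.Icc (n+1) p, Complex.abs (∑ t ∈ Finset.Ico 1 p,
            ((ζ ^ m) ^ t)⁻¹ * (ζ ^ ((⟨0, hn0⟩ : Fin n).val + 1)) ^ t * F t ⟨0, hn0⟩) :=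
          Complex.abs.sum_le _ _
      _ ≤ ∑ _m ∈ Finset.Icc (n+1) p, ((p - 1 : ℕ) * B : ℝ) := by
          apply Finset.sum_le_sum
          intro m _
          calc Complex.abs (∑ t ∈ Finset.Ico 1 p,
                ((ζ ^ m) ^ t)⁻¹ * (ζ ^ ((⟨0, hn0⟩ : Fin n).val + 1)) ^ t * F t ⟨0, hn0⟩)
              ≤ ∑ t ∈ Finset.Ico 1 p,
                  Complex.abs (((ζ ^ m) ^ t)⁻¹ * (ζ ^ ((⟨0, hn0⟩ : Fin n).val + 1)) ^ t
                    * F t ⟨0, hn0⟩) :=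
                Complex.abs.sum_le _ _
            _ ≤ ∑ _t ∈ Finset.Ico 1 p, B := by
                apply Finset.sum_le_sum
                intro t ht
                rw [map_mul, map_mul, map_inv₀, map_pow, map_pow, map_pow, map_pow,
                  habsζ, one_pow, one_pow, one_pow, one_pow, inv_one, one_mul, one_mul]
                exact hFbd t ht ⟨0, hn0⟩
            _ = (p - 1 : ℕ) * B := by rw [Finset.sum_const, Nat.card_Ico, nsmul_eq_mul]
      _ = ((p - n : ℕ) : ℝ) * ((p - 1 : ℕ) * B) := by
          rw [Finset.sum_const, Nat.card_Icc, nsmul_eq_mul]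
          congr 2
          omega
  -- put it together
  have habs : |((Finset.univ.filter (fun X : Fin n → Bool => laced X = true)).card : ℝ)
      - 2 ^ (n - 1)|
      = Complex.abs (((Finset.univ.filter
          (fun X : Fin n → Bool => laced X = true)).card : ℂ) - 2 ^ (n - 1)) := by
    rw [show (((Finset.univ.filter (fun X : Fin n → Bool => laced X = true)).card : ℂ)
        - 2 ^ (n - 1))
      = ((((Finset.univ.filter (fun X : Fin n → Bool => laced X = true)).card : ℝ)
        - 2 ^ (n - 1) : ℝ) : ℂ) by push_cast; ring]
    rw [Complex.abs_ofReal]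
  rw [← hpdef, habs, hkey, map_mul, map_inv₀, Complex.abs_natCast]
  have h2 : Complex.abs (EA + EB) ≤ (p : ℝ) * ((p - 1 : ℕ) * B) := by
    calc Complex.abs (EA + EB) ≤ Complex.abs EA + Complex.abs EB :=
          Complex.abs.add_le _ _
      _ ≤ (n : ℝ) * ((p - 1 : ℕ) * B) + ((p - n : ℕ) : ℝ) * ((p - 1 : ℕ) * B) :=
          add_le_add hEAbd hEBbd
      _ = (p : ℝ) * ((p - 1 : ℕ) * B) := by
          have hc : (n : ℝ) + ((p - n : ℕ) : ℝ) = p := by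
            push_cast [Nat.cast_sub hnp]; ring
          linear_combination (((p - 1 : ℕ) : ℝ) * B) * hc
  have hppos : (0 : ℝ) < p := by exact_mod_cast hp0
  calc (p : ℝ)⁻¹ * Complex.abs (EA + EB)
      ≤ (p : ℝ)⁻¹ * ((p : ℝ) * ((p - 1 : ℕ) * B)) := by
        apply mul_le_mul_of_nonneg_left h2 (by positivity)
    _ = ((p - 1 : ℕ) : ℝ) * B := by field_simp
    _ ≤ (p : ℝ) * B := by
        apply mul_le_mul_of_nonneg_right _ hBpos
        exact_mod_cast Nat.sub_le p 1
    _ = (p : ℝ) ^ 2 * 2 ^ (n + 1 - (p + 1) / 2) := by rw [hBdef]; ring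

/-- The weight of the laced Boolean function on `n` variables satisfies
`wt(f_n) = 2^{n-1}(1 + o(1))` as `n → ∞`; i.e. `wt(f_n)/2^{n-1} → 1`.
In particular, `f_n` is asymptotically balanced. -/
theorem weight_laced_asymptotic :
    Filter.Tendsto (fun n : ℕ =>
        ((Finset.univ.filter (fun X : Fin n → Bool => laced X = true)).card : ℝ) /
          2 ^ (n - 1))
      Filter.atTop (nhds 1) := by
  set f : ℕ → ℝ := fun n =>
    ((Finset.univ.filter (fun X : Fin n → Bool => laced X = true)).card : ℝ) /
      2 ^ (n - 1) with hf
  have hsqrt2 : (1:ℝ) ≤ Real.sqrt 2 := by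
    rw [show (1:ℝ) = Real.sqrt 1 by simp]
    exact Real.sqrt_le_sqrt (by norm_num)
  have hr : |Real.sqrt 2 / 2| < 1 := by
    rw [_root_.abs_of_nonneg (by positivity)]
    rw [div_lt_one (by norm_num)]
    nlinarith [Real.sq_sqrt (by norm_num : (2:ℝ) ≥ 0).le, Real.sqrt_nonneg 2,
      Real.sqrt_lt_sqrt (by norm_num : (0:ℝ) ≤ 2) (by norm_num : (2:ℝ) < 4)]
  have hg : Filter.Tendsto (fun n : ℕ => 16 * (n:ℝ)^2 * (Real.sqrt 2 / 2)^n)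
      Filter.atTop (nhds 0) := by
    have h := tendsto_pow_const_mul_const_pow_of_abs_lt_one 2 hr
    have h2 := h.const_mul (16:ℝ)
    simp only [mul_zero] at h2
    convert h2 using 2 with n
    push_cast
    ring
  have hbd : ∀ᶠ n : ℕ in Filter.atTop,
      ‖f n - 1‖ ≤ 16 * (n:ℝ)^2 * (Real.sqrt 2 / 2)^n := by
    rw [Filter.eventually_atTop]
    refine ⟨5, fun n hn => ?_⟩
    have hmain := main_bound (n := n) hn
    set p : ℕ := leastPrime n with hpdef
    have hp : p.Prime := leastPrime_prime n
    have hnp : n ≤ p := le_leastPrime n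
    have hpm : p % 2 = 1 := Nat.odd_iff.mp (hp.odd_of_ne_two (by omega))
    have hp2n : p ≤ 2 * n - 1 := by
      obtain ⟨q, hqp, hq1, hq2⟩ := Nat.exists_prime_lt_and_le_two_mul (n := n) (by omega)
      have hle : leastPrime n ≤ q := leastPrime_le hqp (le_of_lt hq1)
      have hq2' : q % 2 = 1 := Nat.odd_iff.mp (hqp.odd_of_ne_two (by omega))
      omega
    have h2pos : (0:ℝ) < 2 ^ (n - 1) := by positivity
    have hC : f n - 1 = (((Finset.univ.filter
        (fun X : Fin n → Bool => laced X = true)).card : ℝ) - 2 ^ (n - 1)) / 2 ^ (n - 1) := by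
      rw [hf]
      field_simp
    rw [Real.norm_eq_abs, hC, abs_div, abs_of_pos h2pos, div_le_iff₀ h2pos]
    have hP2 : (p:ℝ)^2 ≤ 4 * (n:ℝ)^2 := by
      have h1 : (p:ℝ) ≤ 2 * n := by
        have : p ≤ 2 * n := by omega
        exact_mod_cast this
      have h0 : (0:ℝ) ≤ p := Nat.cast_nonneg p
      nlinarith
    have hexp : (2:ℝ) ^ (n + 1 - (p + 1) / 2) ≤ 2 * Real.sqrt 2 ^ n := by
      have h1 : n + 1 - (p + 1) / 2 ≤ n / 2 + 1 := by omega
      calc (2:ℝ) ^ (n + 1 - (p + 1) / 2) ≤ 2 ^ (n / 2 + 1) :=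
            pow_le_pow_right₀ (by norm_num) h1
        _ = 2 * 2 ^ (n / 2) := by rw [pow_succ]; ring
        _ = 2 * Real.sqrt 2 ^ (2 * (n / 2)) := by
            rw [pow_mul, Real.sq_sqrt (by norm_num : (0:ℝ) ≤ 2)]
        _ ≤ 2 * Real.sqrt 2 ^ n := by
            have := pow_le_pow_right₀ hsqrt2 (by omega : 2 * (n / 2) ≤ n)
            linarith
    have h2n' : (2:ℝ) ^ (n - 1) = 2 ^ n / 2 := by
      rw [eq_div_iff (by norm_num : (2:ℝ) ≠ 0), ← pow_succ]
      congr 1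
      omega
    calc |((Finset.univ.filter (fun X : Fin n → Bool => laced X = true)).card : ℝ)
          - 2 ^ (n - 1)|
        ≤ (p : ℝ) ^ 2 * 2 ^ (n + 1 - (p + 1) / 2) := hmain
      _ ≤ (4 * (n:ℝ)^2) * (2 * Real.sqrt 2 ^ n) := by
          apply mul_le_mul hP2 hexp (by positivity) (by positivity)
      _ = 8 * (n:ℝ)^2 * Real.sqrt 2 ^ n := by ring
      _ = 16 * (n:ℝ)^2 * (Real.sqrt 2 / 2)^n * 2 ^ (n - 1) := by
          rw [div_pow, h2n']
          have h2n0 : (2:ℝ)^n ≠ 0 := by positivity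
          field_simp
          ring
  have hlim0 : Filter.Tendsto (fun n : ℕ => f n - 1) Filter.atTop (nhds 0) :=
    squeeze_zero_norm' hbd hg
  have := hlim0.add_const 1
  simpa using this
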